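/- For 0 < q < 1 and 0 < s ≤ 1, the following identity holds: −(1/2)·(2q/(1+s²)²)·( Σ_{k=0}^∞ [ 2s²(q⁴−1)q^{4k} + 2s(a_{k+1} − a_k) + (q²−1)(1−s²)²q^{2k} + 2s(b_k − b_{k+1}) ] ) = q, where a_k = √(s²+q^{2k})√(1+s²q^{2k})q^{2k} and b_k = √(s²+q^{2k})√(1+s²q^{2k}). -/

import Mathlib

private lemma telescope_hasSum (c : ℕ → ℝ) (L : ℝ) (hm : ∀ k, c (k + 1) ≤ c k)
    (ht : Filter.Tendsto c Filter.atTop (nhds L)) :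
    HasSum (fun k => c k - c (k + 1)) (c 0 - L) := by
  rw [hasSum_iff_tendsto_nat_of_nonneg (fun k => sub_nonneg.2 (hm k))]
  simp_rw [Finset.sum_range_sub' c]
  exact Filter.Tendsto.sub tendsto_const_nhds ht

/-- The Chern character pairing computation `Ch₂(P,P,P) = q` for the Podleś sphere. -/
theorem podles_chern_pairing (s q : ℝ) (hs0 : 0 < s) (hs1 : s ≤ 1)
    (hq0 : 0 < q) (hq1 : q < 1) :
    -(1 / 2) * (2 * q / (1 + s ^ 2) ^ 2) *
        (∑' k : ℕ,
          (2 * s ^ 2 * (q ^ 4 - 1) * q ^ (4 * k) +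
            2 * s *
              ((Real.sqrt (s ^ 2 + q ^ (2 * (k + 1))) *
                  Real.sqrt (1 + s ^ 2 * q ^ (2 * (k + 1))) * q ^ (2 * (k + 1))) -
                (Real.sqrt (s ^ 2 + q ^ (2 * k)) * Real.sqrt (1 + s ^ 2 * q ^ (2 * k)) *
                  q ^ (2 * k))) +
            (q ^ 2 - 1) * (1 - s ^ 2) ^ 2 * q ^ (2 * k) +
            2 * s *
              ((Real.sqrt (s ^ 2 + q ^ (2 * k)) * Real.sqrt (1 + s ^ 2 * q ^ (2 * k))) -
                (Real.sqrt (s ^ 2 + q ^ (2 * (k + 1))) *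
                  Real.sqrt (1 + s ^ 2 * q ^ (2 * (k + 1))))))) = q := by
  have hq2 : q ^ 2 < 1 := by nlinarith
  have hq4 : q ^ 4 < 1 := by nlinarith
  set b : ℕ → ℝ := fun k => Real.sqrt (s ^ 2 + q ^ (2 * k)) * Real.sqrt (1 + s ^ 2 * q ^ (2 * k))
    with hbdef
  set a : ℕ → ℝ := fun k => b k * q ^ (2 * k) with hadef
  -- basic facts
  have hpow_anti : ∀ k, q ^ (2 * (k + 1)) ≤ q ^ (2 * k) := fun k =>
    pow_le_pow_of_le_one hq0.le hq1.le (by omega)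
  have hbanti : ∀ k, b (k + 1) ≤ b k := by
    intro k
    exact mul_le_mul (Real.sqrt_le_sqrt (by linarith [hpow_anti k]))
      (Real.sqrt_le_sqrt (by nlinarith [hpow_anti k, sq_nonneg s]))
      (Real.sqrt_nonneg _) (Real.sqrt_nonneg _)
  have hbnonneg : ∀ k, 0 ≤ b k := fun k => by positivity
  have haanti : ∀ k, a (k + 1) ≤ a k := by
    intro k
    exact mul_le_mul (hbanti k) (hpow_anti k) (by positivity) (hbnonneg k)
  have htpow : Filter.Tendsto (fun k : ℕ => q ^ (2 * k)) Filter.atTop (nhds 0) := by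
    simp_rw [pow_mul]
    exact tendsto_pow_atTop_nhds_zero_of_lt_one (by positivity) hq2
  have hbt : Filter.Tendsto b Filter.atTop (nhds s) := by
    have hc : Filter.Tendsto (fun x : ℝ => Real.sqrt (s ^ 2 + x) * Real.sqrt (1 + s ^ 2 * x))
        (nhds 0) (nhds (Real.sqrt (s ^ 2 + 0) * Real.sqrt (1 + s ^ 2 * 0))) := by
      apply Continuous.tendsto
      exact ((continuous_const.add continuous_id).sqrt).mul
        ((continuous_const.add (continuous_const.mul continuous_id)).sqrt)
    have : Real.sqrt (s ^ 2 + 0) * Real.sqrt (1 + s ^ 2 * 0) = s := by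
      simp [Real.sqrt_sq hs0.le]
    rw [this] at hc
    exact hc.comp htpow
  have hat : Filter.Tendsto a Filter.atTop (nhds 0) := by
    have := hbt.mul htpow
    simpa using this
  have hb0 : b 0 = 1 + s ^ 2 := by
    show Real.sqrt (s ^ 2 + q ^ (2 * 0)) * Real.sqrt (1 + s ^ 2 * q ^ (2 * 0)) = 1 + s ^ 2
    rw [mul_zero, pow_zero, mul_one, show s ^ 2 + 1 = 1 + s ^ 2 by ring,
      Real.mul_self_sqrt (by positivity)]
  have ha0 : a 0 = 1 + s ^ 2 := by
    show b 0 * q ^ (2 * 0) = 1 + s ^ 2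
    rw [hb0]; norm_num
  -- the four HasSum pieces
  have h1 : HasSum (fun k : ℕ => 2 * s ^ 2 * (q ^ 4 - 1) * q ^ (4 * k))
      (2 * s ^ 2 * (q ^ 4 - 1) * (1 - q ^ 4)⁻¹) := by
    simp_rw [pow_mul]
    exact (hasSum_geometric_of_lt_one (by positivity) hq4).mul_left _
  have h3 : HasSum (fun k : ℕ => (q ^ 2 - 1) * (1 - s ^ 2) ^ 2 * q ^ (2 * k))
      ((q ^ 2 - 1) * (1 - s ^ 2) ^ 2 * (1 - q ^ 2)⁻¹) := by
    simp_rw [pow_mul]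
    exact (hasSum_geometric_of_lt_one (by positivity) hq2).mul_left _
  have h2 : HasSum (fun k : ℕ => 2 * s * (a (k + 1) - a k)) (2 * s * (0 - a 0)) := by
    have h := (telescope_hasSum a 0 haanti hat).mul_left (-(2 * s))
    have hfun : (fun k => -(2 * s) * (a k - a (k + 1))) = fun k => 2 * s * (a (k + 1) - a k) := by
      funext k; ring
    rw [hfun] at h
    rw [show (2 * s * (0 - a 0)) = -(2 * s) * (a 0 - 0) by ring]
    exact h
  have h4 : HasSum (fun k : ℕ => 2 * s * (b k - b (k + 1))) (2 * s * (b 0 - s)) :=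
    (telescope_hasSum b s hbanti hbt).mul_left (2 * s)
  have hsum := ((h1.add h2).add h3).add h4
  rw [hsum.tsum_eq, ha0, hb0]
  have hne1 : (1 : ℝ) - q ^ 4 ≠ 0 := by nlinarith
  have hne2 : (1 : ℝ) - q ^ 2 ≠ 0 := by nlinarith
  have hne3 : (1 : ℝ) + s ^ 2 ≠ 0 := by positivity
  field_simp
  ring
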